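/- Let X0 = (W, Z) be a bounded random vector with W in R^k and Z in R^m, let Y0 be a {0,1}-valued random variable, and suppose: Z is independent of the pair (W, Y0); E[Z] = 0; and P(Y0 = 1 | X0) is a function of W only. Define the population logistic loss l(beta) = E[ -Y0 * X0^T beta + log(1 + exp(X0^T beta)) ] for beta in R^{k+m}. If beta_tilde in R^k is a minimizer of the restricted map b |-> l((b, 0)) over R^k, then the gradient of l vanishes at (beta_tilde, 0); consequently, since l is convex, beta_bar := (beta_tilde, 0) is a global minimizer of l over R^{k+m}, i.e., the target coefficient vector of the (misspecified) logistic regression is supported on the W-coordinates. -/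

import Mathlib

open MeasureTheory ProbabilityTheory Real Finset
open scoped Classical ENNReal

noncomputable section

/-- Number of nonzero entries of a vector (the "ℓ0 norm"). -/
def nnz {ι : Type*} (v : ι → ℝ) : ℕ := (Function.support v).ncard

/-- ℓ¹ norm of a finitely supported vector. -/
def l1 {ι : Type*} [Fintype ι] (v : ι → ℝ) : ℝ := ∑ i, |v i|

/-- ℓ² norm. -/
def l2 {ι : Type*} [Fintype ι] (v : ι → ℝ) : ℝ := Real.sqrt (∑ i, (v i) ^ 2)

/-- ℓ∞ norm. -/
def linf {ι : Type*} [Fintype ι] (v : ι → ℝ) : ℝ := ⨆ i, |v i|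

/-- Euclidean inner product. -/
def dot {ι : Type*} [Fintype ι] (u v : ι → ℝ) : ℝ := ∑ i, u i * v i

/-- Entrywise max norm of a matrix. -/
def matMax {ι κ : Type*} [Fintype ι] [Fintype κ] (A : Matrix ι κ ℝ) : ℝ :=
  ⨆ i, ⨆ j, |A i j|

/-- Matrix ℓ¹ operator norm: maximum column absolute sum. -/
def matL1 {ι κ : Type*} [Fintype ι] [Fintype κ] (A : Matrix ι κ ℝ) : ℝ :=
  ⨆ j, ∑ i, |A i j|

/-- Matrix ℓ² operator (spectral) norm. -/
def matL2 {ι κ : Type*} [Fintype ι] [Fintype κ] (A : Matrix ι κ ℝ) : ℝ :=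
  sInf {c | 0 ≤ c ∧ ∀ v : κ → ℝ, l2 (A.mulVec v) ≤ c * l2 v}

/-- Entrywise ℓ¹ norm of a matrix. -/
def matE1 {ι κ : Type*} [Fintype ι] [Fintype κ] (A : Matrix ι κ ℝ) : ℝ :=
  ∑ i, ∑ j, |A i j|

/-- Principal submatrix with rows and columns indexed by `S`. -/
def subSq {p : ℕ} (A : Matrix (Fin p) (Fin p) ℝ) (S : Set (Fin p)) : Matrix S S ℝ :=
  A.submatrix (fun i => (i : Fin p)) (fun j => (j : Fin p))

/-- Sub-gaussian real random variable with (sub-gaussian) norm at most `σ`: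
`E[exp(z²/σ²)] ≤ 2`. -/
def SubG {Ω : Type*} [MeasurableSpace Ω] (μ : Measure Ω) (z : Ω → ℝ) (σ : ℝ) : Prop :=
  ∫ ω, Real.exp ((z ω) ^ 2 / σ ^ 2) ∂μ ≤ 2

/-- Sub-gaussian random vector with norm at most `σ`. -/
def SubGVec {Ω : Type*} [MeasurableSpace Ω] {ι : Type*} [Fintype ι]
    (μ : Measure Ω) (Z : Ω → ι → ℝ) (σ : ℝ) : Prop :=
  ∀ u : ι → ℝ, SubG μ (fun ω => dot u (Z ω)) (σ * l2 u)


/-- The product `σ`-algebra on matrices. -/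
instance matrixMeasurableSpace {m n α : Type*} [MeasurableSpace α] :
    MeasurableSpace (Matrix m n α) :=
  (inferInstance : MeasurableSpace (m → n → α))
set_option synthInstance.maxHeartbeats 400000

namespace Stmt19Aux

/-- The logistic sigmoid. -/
def sg (t : ℝ) : ℝ := Real.exp t / (1 + Real.exp t)

lemma one_add_exp_pos (t : ℝ) : 0 < 1 + Real.exp t := by positivity

lemma sg_nonneg (t : ℝ) : 0 ≤ sg t := div_nonneg (Real.exp_pos t).le (one_add_exp_pos t).le

lemma sg_le_one (t : ℝ) : sg t ≤ 1 := by
  rw [sg, div_le_one (one_add_exp_pos t)]; linarith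

lemma sg_continuous : Continuous sg :=
  Real.continuous_exp.div (continuous_const.add Real.continuous_exp)
    fun t => (one_add_exp_pos t).ne'

lemma sg_monotone : Monotone sg := by
  intro a b hab
  rw [sg, sg, div_le_div_iff₀ (one_add_exp_pos a) (one_add_exp_pos b)]
  have h := Real.exp_le_exp.2 hab
  nlinarith [Real.exp_pos a, Real.exp_pos b]

lemma hasDerivAt_softplus (t : ℝ) :
    HasDerivAt (fun t => Real.log (1 + Real.exp t)) (sg t) t := by
  have h1 : HasDerivAt (fun t : ℝ => 1 + Real.exp t) (Real.exp t) t :=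
    (Real.hasDerivAt_exp t).const_add 1
  simpa [sg] using h1.log (one_add_exp_pos t).ne'

lemma convexOn_softplus : ConvexOn ℝ Set.univ (fun t => Real.log (1 + Real.exp t)) := by
  have hdiff : Differentiable ℝ (fun t => Real.log (1 + Real.exp t)) :=
    fun t => (hasDerivAt_softplus t).differentiableAt
  have hderiv : deriv (fun t => Real.log (1 + Real.exp t)) = sg := by
    funext t; exact (hasDerivAt_softplus t).deriv
  exact Monotone.convexOn_univ_of_deriv hdiff (hderiv ▸ sg_monotone)

lemma phi_convex_ineq (y : ℝ) (t1 t2 : ℝ) {a b : ℝ} (ha : 0 ≤ a) (hb : 0 ≤ b)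
    (hab : a + b = 1) :
    -y * (a * t1 + b * t2) + Real.log (1 + Real.exp (a * t1 + b * t2)) ≤
      a * (-y * t1 + Real.log (1 + Real.exp t1)) +
        b * (-y * t2 + Real.log (1 + Real.exp t2)) := by
  have h := convexOn_softplus.2 (Set.mem_univ t1) (Set.mem_univ t2) ha hb hab
  simp only [smul_eq_mul] at h
  nlinarith [h]

lemma logistic_hasDerivAt (y t : ℝ) :
    HasDerivAt (fun t => -y * t + Real.log (1 + Real.exp t)) (sg t - y) t := by
  have h1 : HasDerivAt (fun t : ℝ => -y * t) (-y) t := by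
    simpa using (hasDerivAt_id t).const_mul (-y)
  have h2 := h1.add (hasDerivAt_softplus t)
  rw [show sg t - y = -y + sg t by ring]
  exact h2

lemma abs_sg_sub_le (t y : ℝ) (hy : y = 0 ∨ y = 1) : |sg t - y| ≤ 1 := by
  have h1 := sg_nonneg t
  have h2 := sg_le_one t
  rcases hy with h | h <;> rw [h, abs_le] <;> constructor <;> linarith

variable {k m : ℕ}

/-- `v ↦ ⟪x, v.1⟫ + ⟪z, v.2⟫` as a continuous linear map. -/
def pairCLM (x : Fin k → ℝ) (z : Fin m → ℝ) :
    ((Fin k → ℝ) × (Fin m → ℝ)) →L[ℝ] ℝ :=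
  (∑ i, x i • (ContinuousLinearMap.proj i).comp
      (ContinuousLinearMap.fst ℝ (Fin k → ℝ) (Fin m → ℝ))) +
  (∑ j, z j • (ContinuousLinearMap.proj j).comp
      (ContinuousLinearMap.snd ℝ (Fin k → ℝ) (Fin m → ℝ)))

lemma pairCLM_apply (x : Fin k → ℝ) (z : Fin m → ℝ) (v : (Fin k → ℝ) × (Fin m → ℝ)) :
    pairCLM x z v = dot x v.1 + dot z v.2 := by
  simp [pairCLM, dot, ContinuousLinearMap.sum_apply, mul_comm]

lemma dot_self_comm : True := trivial

lemma pairCLM_norm_le (x : Fin k → ℝ) (z : Fin m → ℝ) {B : ℝ} (hB : 0 ≤ B)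
    (hx : ∀ i, |x i| ≤ B) (hz : ∀ j, |z j| ≤ B) :
    ‖pairCLM x z‖ ≤ ((k : ℝ) + m) * B := by
  refine ContinuousLinearMap.opNorm_le_bound _ (by positivity) fun v => ?_
  rw [pairCLM_apply, Real.norm_eq_abs]
  have h1 : |dot x v.1| ≤ (k : ℝ) * B * ‖v‖ := by
    calc |dot x v.1| ≤ ∑ i, |x i * v.1 i| := Finset.abs_sum_le_sum_abs _ _
      _ ≤ ∑ _i : Fin k, B * ‖v‖ := by
          refine Finset.sum_le_sum fun i _ => ?_
          rw [abs_mul]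
          have h2 : |v.1 i| ≤ ‖v‖ :=
            le_trans (norm_le_pi_norm v.1 i) (norm_fst_le v)
          exact mul_le_mul (hx i) h2 (abs_nonneg _) hB
      _ = (k : ℝ) * B * ‖v‖ := by
          simp [Finset.sum_const, Finset.card_univ]; ring
  have h2 : |dot z v.2| ≤ (m : ℝ) * B * ‖v‖ := by
    calc |dot z v.2| ≤ ∑ j, |z j * v.2 j| := Finset.abs_sum_le_sum_abs _ _
      _ ≤ ∑ _j : Fin m, B * ‖v‖ := by
          refine Finset.sum_le_sum fun j _ => ?_
          rw [abs_mul]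
          have h3 : |v.2 j| ≤ ‖v‖ :=
            le_trans (norm_le_pi_norm v.2 j) (norm_snd_le v)
          exact mul_le_mul (hz j) h3 (abs_nonneg _) hB
      _ = (m : ℝ) * B * ‖v‖ := by
          simp [Finset.sum_const, Finset.card_univ]; ring
  calc |dot x v.1 + dot z v.2| ≤ |dot x v.1| + |dot z v.2| := abs_add_le _ _
    _ ≤ (k : ℝ) * B * ‖v‖ + (m : ℝ) * B * ‖v‖ := add_le_add h1 h2
    _ = ((k : ℝ) + m) * B * ‖v‖ := by ring

lemma F_hasFDerivAt (x : Fin k → ℝ) (z : Fin m → ℝ) (y : ℝ)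
    (β : (Fin k → ℝ) × (Fin m → ℝ)) :
    HasFDerivAt
      (fun β : (Fin k → ℝ) × (Fin m → ℝ) =>
        -y * (dot x β.1 + dot z β.2) + Real.log (1 + Real.exp (dot x β.1 + dot z β.2)))
      ((sg (dot x β.1 + dot z β.2) - y) • pairCLM x z) β := by
  have hL : HasFDerivAt (pairCLM x z) (pairCLM x z) β := (pairCLM x z).hasFDerivAt
  have h := (logistic_hasDerivAt y (pairCLM x z β)).comp_hasFDerivAt β hL
  simpa [Function.comp_def, pairCLM_apply] using h

lemma dot_combo {ι : Type*} [Fintype ι] (u v w : ι → ℝ) (a b : ℝ) :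
    dot u (a • v + b • w) = a * dot u v + b * dot u w := by
  simp only [dot, Pi.add_apply, Pi.smul_apply, smul_eq_mul, Finset.mul_sum,
    ← Finset.sum_add_distrib]
  refine Finset.sum_congr rfl fun i _ => by ring

lemma norm_smul_clm_le {E : Type*} [NormedAddCommGroup E] [NormedSpace ℝ E]
    (c : ℝ) (L : E →L[ℝ] ℝ) {D : ℝ} (hc : |c| ≤ 1) (hL : ‖L‖ ≤ D) : ‖c • L‖ ≤ D := by
  refine le_trans (ContinuousLinearMap.opNorm_smul_le _ _) ?_
  rw [Real.norm_eq_abs]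
  calc |c| * ‖L‖ ≤ 1 * D := mul_le_mul hc hL (norm_nonneg _) one_pos.le
    _ = D := one_mul _

lemma dot_zero_right {ι : Type*} [Fintype ι] (u : ι → ℝ) : dot u 0 = 0 := by
  simp [dot]

end Stmt19Aux

set_option maxHeartbeats 1600000 in
/-- Supplement Section IV of Liang–Tan: in a misspecified logistic
regression with covariates `X₀ = (W, Z)` where `Z` is independent of `(W, Y₀)`,
`E[Z] = 0`, and `P(Y₀ = 1 | X₀)` depends on `W` only, if `β̃` minimizes the
restricted population logistic loss `b ↦ ℓ(b, 0)`, then the gradient of `ℓ` vanishes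
at `(β̃, 0)` and, by convexity, `(β̃, 0)` is a global minimizer of `ℓ`. -/
theorem stmt19 {k m : ℕ}
    {Ω : Type*} [MeasurableSpace Ω] (μ : Measure Ω) [IsProbabilityMeasure μ]
    (W : Ω → Fin k → ℝ) (Z : Ω → Fin m → ℝ) (Y0 : Ω → ℝ)
    (hWm : Measurable W) (hZm : Measurable Z) (hY0m : Measurable Y0)
    -- boundedness of the covariate vector
    (hbdd : ∃ B : ℝ, ∀ ω, (∀ i, |W ω i| ≤ B) ∧ ∀ j, |Z ω j| ≤ B)
    -- Y₀ takes values in {0,1}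
    (hY01 : ∀ ω, Y0 ω = 0 ∨ Y0 ω = 1)
    -- Z is independent of the pair (W, Y₀)
    (hindep : IndepFun Z (fun ω => (W ω, Y0 ω)) μ)
    -- E[Z] = 0
    (hZ0 : ∀ j, ∫ ω, Z ω j ∂μ = 0)
    -- P(Y₀ = 1 | X₀) is a function of W only (via the conditional expectation of Y₀)
    (hcond : ∃ h : (Fin k → ℝ) → ℝ, Measurable h ∧
      (μ[Y0 | MeasurableSpace.comap (fun ω => (W ω, Z ω)) inferInstance])
        =ᵐ[μ] fun ω => h (W ω))
    -- the population logistic loss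
    (l : (Fin k → ℝ) → (Fin m → ℝ) → ℝ)
    (hl : ∀ b c, l b c =
      ∫ ω, (-(Y0 ω) * (dot (W ω) b + dot (Z ω) c)
        + Real.log (1 + Real.exp (dot (W ω) b + dot (Z ω) c))) ∂μ)
    -- β̃ minimizes the restricted loss
    (betaTilde : Fin k → ℝ)
    (hmin : ∀ b : Fin k → ℝ, l betaTilde 0 ≤ l b 0) :
    HasFDerivAt (fun bc : (Fin k → ℝ) × (Fin m → ℝ) => l bc.1 bc.2)
        (0 : (Fin k → ℝ) × (Fin m → ℝ) →L[ℝ] ℝ) (betaTilde, 0) ∧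
      ∀ (b : Fin k → ℝ) (c : Fin m → ℝ), l betaTilde 0 ≤ l b c := by
  obtain ⟨B, hB⟩ := hbdd
  set B' : ℝ := max B 0 with hB'def
  have hB'0 : (0 : ℝ) ≤ B' := le_max_right _ _
  have hWb : ∀ ω i, |W ω i| ≤ B' := fun ω i => ((hB ω).1 i).trans (le_max_left _ _)
  have hZb : ∀ ω j, |Z ω j| ≤ B' := fun ω j => ((hB ω).2 j).trans (le_max_left _ _)
  set C : ℝ := ((k : ℝ) + m) * B' with hCdef
  have hC0 : (0 : ℝ) ≤ C := by positivity
  have hnorm : ∀ ω, ‖Stmt19Aux.pairCLM (W ω) (Z ω)‖ ≤ C :=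
    fun ω => Stmt19Aux.pairCLM_norm_le (W ω) (Z ω) hB'0 (hWb ω) (hZb ω)
  -- measurability of the linear functionals
  have hdotW : ∀ b : Fin k → ℝ, Measurable fun ω => dot (W ω) b := fun b =>
    Finset.measurable_sum _ fun i _ => ((measurable_pi_apply i).comp hWm).mul_const _
  have hdotZ : ∀ c : Fin m → ℝ, Measurable fun ω => dot (Z ω) c := fun c =>
    Finset.measurable_sum _ fun j _ => ((measurable_pi_apply j).comp hZm).mul_const _
  have hLmeas : ∀ β : (Fin k → ℝ) × (Fin m → ℝ),
      Measurable fun ω => dot (W ω) β.1 + dot (Z ω) β.2 :=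
    fun β => (hdotW β.1).add (hdotZ β.2)
  have hLbound : ∀ (ω) (β : (Fin k → ℝ) × (Fin m → ℝ)),
      |dot (W ω) β.1 + dot (Z ω) β.2| ≤ C * ‖β‖ := by
    intro ω β
    rw [← Stmt19Aux.pairCLM_apply]
    have h1 := (Stmt19Aux.pairCLM (W ω) (Z ω)).le_opNorm β
    rw [Real.norm_eq_abs] at h1
    exact h1.trans (mul_le_mul_of_nonneg_right (hnorm ω) (norm_nonneg β))
  -- measurability and integrability of the integrand
  have hFmeas : ∀ β : (Fin k → ℝ) × (Fin m → ℝ),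
      Measurable fun ω => -(Y0 ω) * (dot (W ω) β.1 + dot (Z ω) β.2)
        + Real.log (1 + Real.exp (dot (W ω) β.1 + dot (Z ω) β.2)) := fun β =>
    ((hY0m.neg).mul (hLmeas β)).add
      (Real.measurable_log.comp (measurable_const.add (Real.measurable_exp.comp (hLmeas β))))
  have hY0b : ∀ ω, |Y0 ω| ≤ 1 := by
    intro ω; rcases hY01 ω with h | h <;> rw [h] <;> norm_num
  have hFint : ∀ β : (Fin k → ℝ) × (Fin m → ℝ),
      Integrable (fun ω => -(Y0 ω) * (dot (W ω) β.1 + dot (Z ω) β.2)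
        + Real.log (1 + Real.exp (dot (W ω) β.1 + dot (Z ω) β.2))) μ := by
    intro β
    refine Integrable.mono'
      (integrable_const (C * ‖β‖ + Real.log (1 + Real.exp (C * ‖β‖))))
      (hFmeas β).aestronglyMeasurable (Filter.Eventually.of_forall fun ω => ?_)
    have ht := hLbound ω β
    set t : ℝ := dot (W ω) β.1 + dot (Z ω) β.2 with htdef
    have hsp0 : (0 : ℝ) ≤ Real.log (1 + Real.exp t) :=
      Real.log_nonneg (by nlinarith [Real.exp_pos t])
    have hsp : Real.log (1 + Real.exp t) ≤ Real.log (1 + Real.exp (C * ‖β‖)) := by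
      apply Real.log_le_log (by positivity)
      have := Real.exp_le_exp.2 (le_of_abs_le ht)
      linarith
    have h1 : |(-(Y0 ω)) * t| ≤ C * ‖β‖ := by
      rw [abs_mul, abs_neg]
      calc |Y0 ω| * |t| ≤ 1 * (C * ‖β‖) :=
            mul_le_mul (hY0b ω) ht (abs_nonneg _) one_pos.le
        _ = C * ‖β‖ := one_mul _
    rw [Real.norm_eq_abs]
    calc |(-(Y0 ω)) * t + Real.log (1 + Real.exp t)|
        ≤ |(-(Y0 ω)) * t| + |Real.log (1 + Real.exp t)| := abs_add_le _ _
      _ ≤ C * ‖β‖ + Real.log (1 + Real.exp (C * ‖β‖)) := by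
          rw [abs_of_nonneg hsp0]; exact add_le_add h1 hsp
  -- the pointwise derivative at the candidate minimizer
  set A : Ω → ℝ := fun ω => Stmt19Aux.sg (dot (W ω) betaTilde) - Y0 ω with hAdef
  have hAmeas : Measurable A :=
    (Stmt19Aux.sg_continuous.measurable.comp (hdotW betaTilde)).sub hY0m
  have hAb : ∀ ω, |A ω| ≤ 1 := fun ω => Stmt19Aux.abs_sg_sub_le _ _ (hY01 ω)
  have hAint : Integrable A μ :=
    Integrable.mono' (integrable_const 1) hAmeas.aestronglyMeasurable
      (Filter.Eventually.of_forall fun ω => by rw [Real.norm_eq_abs]; exact hAb ω)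
  -- strong measurability of scalar multiples of pairCLM
  have hsmul_sm : ∀ g : Ω → ℝ, Measurable g →
      StronglyMeasurable (fun ω => g ω • Stmt19Aux.pairCLM (W ω) (Z ω)) := by
    intro g hg
    have hrw : (fun ω => g ω • Stmt19Aux.pairCLM (W ω) (Z ω)) =
        fun ω =>
          (∑ i, (g ω * W ω i) • ((ContinuousLinearMap.proj i).comp
              (ContinuousLinearMap.fst ℝ (Fin k → ℝ) (Fin m → ℝ)))) +
          (∑ j, (g ω * Z ω j) • ((ContinuousLinearMap.proj j).comp
              (ContinuousLinearMap.snd ℝ (Fin k → ℝ) (Fin m → ℝ)))) := by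
      funext ω
      simp [Stmt19Aux.pairCLM, smul_add, Finset.smul_sum, smul_smul]
    rw [hrw]
    apply StronglyMeasurable.add
    · refine Finset.stronglyMeasurable_fun_sum _ fun i _ => ?_
      exact ((hg.mul ((measurable_pi_apply i).comp hWm)).stronglyMeasurable).smul_const _
    · refine Finset.stronglyMeasurable_fun_sum _ fun j _ => ?_
      exact ((hg.mul ((measurable_pi_apply j).comp hZm)).stronglyMeasurable).smul_const _
  have hΦint : Integrable (fun ω => A ω • Stmt19Aux.pairCLM (W ω) (Z ω)) μ := by
    refine Integrable.mono' (integrable_const C)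
      (hsmul_sm A hAmeas).aestronglyMeasurable
      (Filter.Eventually.of_forall fun ω => ?_)
    exact Stmt19Aux.norm_smul_clm_le _ _ (hAb ω) (hnorm ω)
  -- differentiation under the integral sign
  have key : HasFDerivAt (fun bc : (Fin k → ℝ) × (Fin m → ℝ) => l bc.1 bc.2)
      (∫ ω, A ω • Stmt19Aux.pairCLM (W ω) (Z ω) ∂μ) (betaTilde, 0) := by
    have hrw : (fun bc : (Fin k → ℝ) × (Fin m → ℝ) => l bc.1 bc.2) =
        fun bc : (Fin k → ℝ) × (Fin m → ℝ) =>
          ∫ ω, (-(Y0 ω) * (dot (W ω) bc.1 + dot (Z ω) bc.2)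
            + Real.log (1 + Real.exp (dot (W ω) bc.1 + dot (Z ω) bc.2))) ∂μ :=
      funext fun bc => hl bc.1 bc.2
    rw [hrw]
    have h := hasFDerivAt_integral_of_dominated_of_fderiv_le
      (F := fun (β : (Fin k → ℝ) × (Fin m → ℝ)) ω =>
        -(Y0 ω) * (dot (W ω) β.1 + dot (Z ω) β.2)
          + Real.log (1 + Real.exp (dot (W ω) β.1 + dot (Z ω) β.2)))
      (F' := fun β ω => (Stmt19Aux.sg (dot (W ω) β.1 + dot (Z ω) β.2) - Y0 ω) •
          Stmt19Aux.pairCLM (W ω) (Z ω))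
      (x₀ := ((betaTilde, 0) : (Fin k → ℝ) × (Fin m → ℝ))) (bound := fun _ => C)
      (Metric.ball_mem_nhds _ zero_lt_one)
      (Filter.Eventually.of_forall fun β => (hFmeas β).aestronglyMeasurable)
      (hFint _)
      (by
        have hsm := hsmul_sm (fun ω => Stmt19Aux.sg (dot (W ω) betaTilde + dot (Z ω) 0) - Y0 ω)
          ((Stmt19Aux.sg_continuous.measurable.comp ((hdotW betaTilde).add (hdotZ 0))).sub hY0m)
        exact hsm.aestronglyMeasurable)
      (Filter.Eventually.of_forall fun ω x _ =>
        Stmt19Aux.norm_smul_clm_le _ _ (Stmt19Aux.abs_sg_sub_le _ _ (hY01 ω)) (hnorm ω))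
      (integrable_const C)
      (Filter.Eventually.of_forall fun ω x _ =>
        Stmt19Aux.F_hasFDerivAt (W ω) (Z ω) (Y0 ω) x)
    have heq : ∫ ω, (Stmt19Aux.sg (dot (W ω) betaTilde + dot (Z ω) 0) - Y0 ω) •
          Stmt19Aux.pairCLM (W ω) (Z ω) ∂μ
        = ∫ ω, A ω • Stmt19Aux.pairCLM (W ω) (Z ω) ∂μ := by
      refine integral_congr_ae (Filter.Eventually.of_forall fun ω => ?_)
      simp [hAdef, Stmt19Aux.dot_zero_right]
    rw [heq] at h
    exact h
  -- the W-block of the gradient vanishes (first-order condition at the minimizer)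
  have hinl : HasFDerivAt (fun b : Fin k → ℝ => l b 0)
      ((∫ ω, A ω • Stmt19Aux.pairCLM (W ω) (Z ω) ∂μ).comp
        (ContinuousLinearMap.inl ℝ (Fin k → ℝ) (Fin m → ℝ))) betaTilde := by
    have h2 := key.comp betaTilde
      (ContinuousLinearMap.inl ℝ (Fin k → ℝ) (Fin m → ℝ)).hasFDerivAt
    simpa [Function.comp_def] using h2
  have hloc : IsLocalMin (fun b : Fin k → ℝ => l b 0) betaTilde :=
    Filter.Eventually.of_forall fun b => hmin b
  have hW0 : (∫ ω, A ω • Stmt19Aux.pairCLM (W ω) (Z ω) ∂μ).comp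
      (ContinuousLinearMap.inl ℝ (Fin k → ℝ) (Fin m → ℝ)) = 0 :=
    hloc.hasFDerivAt_eq_zero hinl
  -- the Z-block of the gradient vanishes (independence + centering)
  have hAZint : ∀ j, Integrable (fun ω => A ω * Z ω j) μ := by
    intro j
    refine Integrable.mono' (integrable_const B')
      (hAmeas.mul ((measurable_pi_apply j).comp hZm)).aestronglyMeasurable
      (Filter.Eventually.of_forall fun ω => ?_)
    rw [Real.norm_eq_abs, abs_mul]
    calc |A ω| * |Z ω j| ≤ 1 * B' :=
          mul_le_mul (hAb ω) (hZb ω j) (abs_nonneg _) one_pos.le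
      _ = B' := one_mul _
  have hAZ : ∀ j, ∫ ω, A ω * Z ω j ∂μ = 0 := by
    intro j
    have hψ : Measurable fun p : (Fin k → ℝ) × ℝ =>
        Stmt19Aux.sg (dot p.1 betaTilde) - p.2 :=
      (Stmt19Aux.sg_continuous.measurable.comp
        (Finset.measurable_sum _ fun i _ =>
          ((measurable_pi_apply i).comp measurable_fst).mul_const _)).sub measurable_snd
    have hind : IndepFun (fun ω => Z ω j) A μ := by
      have h3 := hindep.comp (measurable_pi_apply j) hψ
      exact h3
    have hZjint : Integrable (fun ω => Z ω j) μ := by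
      refine Integrable.mono' (integrable_const B')
        ((measurable_pi_apply j).comp hZm).aestronglyMeasurable
        (Filter.Eventually.of_forall fun ω => ?_)
      rw [Real.norm_eq_abs]; exact hZb ω j
    have hmul := ProbabilityTheory.IndepFun.integral_fun_mul_eq_mul_integral hind
      hZjint.aestronglyMeasurable hAint.aestronglyMeasurable
    have hcomm : ∫ ω, A ω * Z ω j ∂μ = ∫ ω, Z ω j * A ω ∂μ :=
      integral_congr_ae (Filter.Eventually.of_forall fun ω => mul_comm _ _)
    rw [hcomm]
    calc ∫ ω, Z ω j * A ω ∂μ = (∫ ω, Z ω j ∂μ) * ∫ ω, A ω ∂μ := by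
          simpa [Pi.mul_apply] using hmul
      _ = 0 := by rw [hZ0 j, zero_mul]
  have hZblock : ∀ u : Fin m → ℝ,
      (∫ ω, A ω • Stmt19Aux.pairCLM (W ω) (Z ω) ∂μ) (((0 : Fin k → ℝ), u)) = 0 := by
    intro u
    rw [ContinuousLinearMap.integral_apply hΦint]
    have hrw : (fun ω => (A ω • Stmt19Aux.pairCLM (W ω) (Z ω)) (((0 : Fin k → ℝ), u)))
        = fun ω => ∑ j, (A ω * Z ω j) * u j := by
      funext ω
      rw [ContinuousLinearMap.smul_apply, Stmt19Aux.pairCLM_apply]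
      simp only [smul_eq_mul, Stmt19Aux.dot_zero_right, zero_add]
      simp only [dot, Finset.mul_sum]
      exact Finset.sum_congr rfl fun j _ => by ring
    rw [hrw, integral_finset_sum _ fun j _ => (hAZint j).mul_const _]
    simp [integral_mul_const, hAZ]
  -- the full gradient vanishes
  have hD0 : (∫ ω, A ω • Stmt19Aux.pairCLM (W ω) (Z ω) ∂μ) = 0 := by
    refine ContinuousLinearMap.ext fun v => ?_
    obtain ⟨v1, v2⟩ := v
    have h1 : (∫ ω, A ω • Stmt19Aux.pairCLM (W ω) (Z ω) ∂μ) ((v1, (0 : Fin m → ℝ))) = 0 := by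
      have h4 := ContinuousLinearMap.ext_iff.1 hW0 v1
      simpa using h4
    have h2 := hZblock v2
    have hv : ((v1, (0 : Fin m → ℝ)) : (Fin k → ℝ) × (Fin m → ℝ))
        + (((0 : Fin k → ℝ), v2) : (Fin k → ℝ) × (Fin m → ℝ)) = (v1, v2) := by
      simp [Prod.ext_iff]
    rw [ContinuousLinearMap.zero_apply, ← hv, map_add, h1, h2, add_zero]
  have keyZero : HasFDerivAt (fun bc : (Fin k → ℝ) × (Fin m → ℝ) => l bc.1 bc.2)
      (0 : (Fin k → ℝ) × (Fin m → ℝ) →L[ℝ] ℝ) (betaTilde, 0) := hD0 ▸ key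
  refine ⟨keyZero, ?_⟩
  -- convexity inequality for the loss
  have hconv : ∀ (x y : (Fin k → ℝ) × (Fin m → ℝ)) (a a' : ℝ), 0 ≤ a → 0 ≤ a' →
      a + a' = 1 →
      l (a • x + a' • y).1 (a • x + a' • y).2 ≤ a * l x.1 x.2 + a' * l y.1 y.2 := by
    intro x y a a' ha ha' haa
    rw [hl, hl, hl]
    have hpt : ∀ ω, (-(Y0 ω) * (dot (W ω) (a • x + a' • y).1 + dot (Z ω) (a • x + a' • y).2)
        + Real.log (1 + Real.exp (dot (W ω) (a • x + a' • y).1 + dot (Z ω) (a • x + a' • y).2)))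
        ≤ a * (-(Y0 ω) * (dot (W ω) x.1 + dot (Z ω) x.2)
            + Real.log (1 + Real.exp (dot (W ω) x.1 + dot (Z ω) x.2)))
          + a' * (-(Y0 ω) * (dot (W ω) y.1 + dot (Z ω) y.2)
            + Real.log (1 + Real.exp (dot (W ω) y.1 + dot (Z ω) y.2))) := by
      intro ω
      rw [show (a • x + a' • y).1 = a • x.1 + a' • y.1 from rfl,
        show (a • x + a' • y).2 = a • x.2 + a' • y.2 from rfl,
        Stmt19Aux.dot_combo, Stmt19Aux.dot_combo]
      have harg : a * dot (W ω) x.1 + a' * dot (W ω) y.1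
            + (a * dot (Z ω) x.2 + a' * dot (Z ω) y.2)
          = a * (dot (W ω) x.1 + dot (Z ω) x.2) + a' * (dot (W ω) y.1 + dot (Z ω) y.2) := by
        ring
      rw [harg]
      exact Stmt19Aux.phi_convex_ineq (Y0 ω) _ _ ha ha' haa
    calc (∫ ω, (-(Y0 ω) * (dot (W ω) (a • x + a' • y).1 + dot (Z ω) (a • x + a' • y).2)
            + Real.log (1 + Real.exp (dot (W ω) (a • x + a' • y).1
              + dot (Z ω) (a • x + a' • y).2))) ∂μ)
        ≤ ∫ ω, (a * (-(Y0 ω) * (dot (W ω) x.1 + dot (Z ω) x.2)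
              + Real.log (1 + Real.exp (dot (W ω) x.1 + dot (Z ω) x.2)))
            + a' * (-(Y0 ω) * (dot (W ω) y.1 + dot (Z ω) y.2)
              + Real.log (1 + Real.exp (dot (W ω) y.1 + dot (Z ω) y.2)))) ∂μ :=
          integral_mono (hFint _) (((hFint x).const_mul a).add ((hFint y).const_mul a'))
            fun ω => hpt ω
      _ = a * (∫ ω, (-(Y0 ω) * (dot (W ω) x.1 + dot (Z ω) x.2)
              + Real.log (1 + Real.exp (dot (W ω) x.1 + dot (Z ω) x.2))) ∂μ)
          + a' * ∫ ω, (-(Y0 ω) * (dot (W ω) y.1 + dot (Z ω) y.2)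
              + Real.log (1 + Real.exp (dot (W ω) y.1 + dot (Z ω) y.2))) ∂μ := by
          rw [integral_add ((hFint x).const_mul a) ((hFint y).const_mul a'),
            integral_const_mul, integral_const_mul]
  intro b c
  set p : (Fin k → ℝ) × (Fin m → ℝ) := (b, c) with hpdef
  set q : (Fin k → ℝ) × (Fin m → ℝ) := (betaTilde, 0) with hqdef
  have hpath : HasDerivAt (fun t : ℝ => q + t • (p - q)) (p - q) 0 := by
    simpa using ((hasDerivAt_id (0 : ℝ)).smul_const (p - q)).const_add q
  have hfd : HasFDerivAt (fun bc : (Fin k → ℝ) × (Fin m → ℝ) => l bc.1 bc.2)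
      (0 : (Fin k → ℝ) × (Fin m → ℝ) →L[ℝ] ℝ) ((fun t : ℝ => q + t • (p - q)) 0) := by
    simpa [hqdef] using keyZero
  have hgd : HasDerivAt (fun t : ℝ => l (q + t • (p - q)).1 (q + t • (p - q)).2) 0 0 := by
    have h5 := hfd.comp_hasDerivAt 0 hpath
    simpa [Function.comp_def] using h5
  have hgconv : ConvexOn ℝ Set.univ
      (fun t : ℝ => l (q + t • (p - q)).1 (q + t • (p - q)).2) := by
    refine ⟨convex_univ, ?_⟩
    intro t1 _ t2 _ a a' ha ha' haa
    have ha2 : a' = 1 - a := by linarith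
    subst ha2
    have hcomb : q + (a • t1 + (1 - a) • t2) • (p - q)
        = a • (q + t1 • (p - q)) + (1 - a) • (q + t2 • (p - q)) := by
      rw [Prod.ext_iff]
      constructor <;>
        · funext i
          simp only [Prod.fst_add, Prod.snd_add, Prod.smul_fst, Prod.smul_snd, Prod.fst_sub,
            Prod.snd_sub, Pi.add_apply, Pi.smul_apply, Pi.sub_apply, smul_eq_mul]
          ring
    simp only [smul_eq_mul]
    rw [show a • t1 + (1 - a) • t2 = a * t1 + (1 - a) * t2 from rfl] at hcomb
    rw [hcomb]
    exact hconv _ _ a (1 - a) ha ha' haa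
  have hslope := hgconv.le_slope_of_hasDerivAt (Set.mem_univ (0 : ℝ))
    (Set.mem_univ (1 : ℝ)) zero_lt_one hgd
  rw [slope_def_field] at hslope
  have hfin : l (q + (0 : ℝ) • (p - q)).1 (q + (0 : ℝ) • (p - q)).2
      ≤ l (q + (1 : ℝ) • (p - q)).1 (q + (1 : ℝ) • (p - q)).2 := by
    simp only [div_one, sub_zero] at hslope
    linarith
  have h0 : q + (0 : ℝ) • (p - q) = q := by simp
  have h1 : q + (1 : ℝ) • (p - q) = p := by simp
  rw [h0, h1] at hfin
  simpa [hpdef, hqdef] using hfin
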